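/- Identifying each Towers-of-Bucharest configuration with the ternary n-tuple (a_n,...,a_1) where a_i ∈ {0,1,2} is the peg of disk D_i, the sequence of configurations along the unique Hamiltonian path from all-on-P_0 to all-on-P_2 is exactly the ternary reflected Gray code: consecutive tuples differ in exactly one digit, and in it by ±1. -/

import Mathlib

/-- A configuration of the Towers of Bucharest/Hanoi with `n` disks assigns to
each disk `D_{d+1}` (disk `d : Fin n`; smaller index means smaller disk) the
peg `c d : Fin 3` on which it lies.  Disks on the same peg are necessarily
stacked in size order. -/
abbrev HanoiConf (n : ℕ) := Fin n → Fin 3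

/-- A legal move of the Towers of Bucharest: some disk `d` which is topmost on
its peg (no smaller disk on the same peg) moves to an *adjacent* peg
(`P₀ ↔ P₁` or `P₁ ↔ P₂`) carrying no smaller disk; all other disks stay. -/
def bucharestMove {n : ℕ} (c c' : HanoiConf n) : Prop :=
  ∃ d : Fin n,
    c d ≠ c' d ∧
    ((c d : ℕ) + 1 = (c' d : ℕ) ∨ (c' d : ℕ) + 1 = (c d : ℕ)) ∧
    (∀ e, e ≠ d → c e = c' e) ∧
    (∀ e, e < d → c e ≠ c d ∧ c e ≠ c' d)

/-- The `m`-ary reflected Gray code on `n`-tuples (least significant digit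
last in the list): for `n = 0` the single empty tuple; each codeword `Cᵢ`
(1-indexed `i`) of the code for length `n` is extended by the digits
`0, …, m-1` in increasing order if `i` is odd, decreasing if `i` is even. -/
def mGray (m : ℕ) : ℕ → List (List ℕ)
  | 0 => [[]]
  | n + 1 =>
      (((List.range (mGray m n).length).zip (mGray m n)).map (fun p =>
        (if p.1 % 2 = 0 then List.range m else (List.range m).reverse).map
          (fun d => p.2 ++ [d]))).flatten

/-- The ternary tuple `(a_n, …, a_1)` associated with a configuration, where
`a_i ∈ {0,1,2}` is the peg of disk `D_i` (so `a_n` comes first). -/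
def confTuple {n : ℕ} (c : HanoiConf n) : List ℕ :=
  (List.ofFn (fun d : Fin n => (c d : ℕ))).reverse

namespace BGray

def sweep (b : Bool) : List (Fin 3) := if b then [2,1,0] else [0,1,2]

def expand {n : ℕ} : Bool → List (HanoiConf n) → List (HanoiConf (n+1))
  | _, [] => []
  | b, u :: t => ((sweep b).map fun d => Fin.cons d u) ++ expand (!b) t

def gexp : Bool → List (List ℕ) → List (List ℕ)
  | _, [] => []
  | b, w :: t => ((if b then [2,1,0] else [0,1,2]).map fun d => w ++ [d]) ++ gexp (!b) t

lemma expand_length {n : ℕ} (b : Bool) (L : List (HanoiConf n)) :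
    (expand b L).length = 3 * L.length := by
  induction L generalizing b with
  | nil => rfl
  | cons u t ih => cases b <;> simp [expand, sweep, ih] <;> omega

lemma expand_head? {n : ℕ} (b : Bool) (u : HanoiConf n) (t : List (HanoiConf n)) :
    (expand b (u :: t)).head? = some (Fin.cons (if b then 2 else 0) u) := by
  cases b <;> rfl

lemma mem_expand_of_mem {n : ℕ} {b : Bool} {L : List (HanoiConf n)} {u : HanoiConf n}
    (h : u ∈ L) : Fin.cons 1 u ∈ expand b L := by
  induction L generalizing b with
  | nil => simp at h
  | cons v t ih =>
    rcases List.mem_cons.mp h with rfl | h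
    · cases b <;> simp [expand, sweep]
    · exact List.mem_append_right _ (ih h)

lemma expand_getLast? {n : ℕ} {b : Bool} {L : List (HanoiConf n)} (h : L ≠ []) :
    ∃ d u, (expand b L).getLast? = some (Fin.cons d u) ∧ L.getLast? = some u := by
  induction L generalizing b with
  | nil => exact absurd rfl h
  | cons v t ih =>
    cases t with
    | nil =>
      refine ⟨if b then 0 else 2, v, ?_, rfl⟩
      cases b <;> rfl
    | cons w t' =>
      obtain ⟨d, u, h1, h2⟩ := ih (b := !b) (by simp)
      refine ⟨d, u, ?_, ?_⟩
      · rw [show expand b (v :: w :: t') = ((sweep b).map fun d => Fin.cons d v) ++ expand (!b) (w :: t') from rfl,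
          List.getLast?_append, h1]
        rfl
      · rw [List.getLast?_cons_cons]; exact h2

lemma confTuple_cons {n : ℕ} (d : Fin 3) (u : HanoiConf n) :
    confTuple (Fin.cons d u) = confTuple u ++ [(d : ℕ)] := by
  simp [confTuple, List.ofFn_succ]

lemma map_confTuple_expand {n : ℕ} (b : Bool) (L : List (HanoiConf n)) :
    (expand b L).map confTuple = gexp b (L.map confTuple) := by
  induction L generalizing b with
  | nil => rfl
  | cons u t ih =>
    show (((sweep b).map fun d => Fin.cons d u) ++ expand (!b) t).map confTuple = _
    rw [List.map_append, ih]
    show _ = ((if b then [2,1,0] else [0,1,2]).map fun d => confTuple u ++ [d]) ++ gexp (!b) (t.map confTuple)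
    congr 1
    cases b <;> simp [sweep, confTuple_cons]

lemma gexp_enumFrom (L : List (List ℕ)) (i : ℕ) :
    (((List.range' i L.length).zip L).map (fun p =>
        (if p.1 % 2 = 0 then List.range 3 else (List.range 3).reverse).map
          (fun d => p.2 ++ [d]))).flatten = gexp (decide (i % 2 = 1)) L := by
  induction L generalizing i with
  | nil => rfl
  | cons w t ih =>
    rw [List.length_cons, List.range'_succ, List.zip_cons_cons, List.map_cons, List.flatten_cons, ih (i+1)]
    have hr : List.range 3 = [0,1,2] := rfl
    rcases Nat.mod_two_eq_zero_or_one i with h | h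
    · have h1 : (i+1) % 2 = 1 := by omega
      simp [gexp, h, h1, hr]
    · have h1 : (i+1) % 2 = 0 := by omega
      simp [gexp, h, h1, hr]

lemma mGray_succ (n : ℕ) : mGray 3 (n+1) = gexp false (mGray 3 n) := by
  show (((List.range (mGray 3 n).length).zip (mGray 3 n)).map _).flatten = _
  rw [List.range_eq_range' (n := (mGray 3 n).length), gexp_enumFrom]
  rfl

lemma chain'_getElem {α : Type*} {R : α → α → Prop} {l : List α} (h : List.Chain' R l)
    (i : ℕ) (hi : i + 1 < l.length) : R l[i] l[i+1] := by
  have := List.isChain_iff_getElem.mp h i (by omega)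
  simpa [List.get_eq_getElem] using this

lemma move_cases {n : ℕ} {c c' : HanoiConf (n+1)} (h : bucharestMove c c') :
    (Fin.tail c = Fin.tail c' ∧ ((c 0 : ℕ) + 1 = (c' 0 : ℕ) ∨ (c' 0 : ℕ) + 1 = (c 0 : ℕ))) ∨
    (c 0 = c' 0 ∧ (c 0 : ℕ) ≠ 1 ∧ bucharestMove (Fin.tail c) (Fin.tail c')) := by
  obtain ⟨d, hne, hadj, hoth, hsm⟩ := h
  by_cases hd : d = 0
  · subst hd
    exact Or.inl ⟨funext fun e => hoth e.succ (Fin.succ_ne_zero e), hadj⟩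
  · right
    have h0 : c 0 = c' 0 := hoth 0 (Ne.symm hd)
    have hsm0 := hsm 0 (Fin.pos_of_ne_zero hd)
    have hne1 : (c 0 : ℕ) ≠ 1 := by
      have b1 : (c 0 : ℕ) < 3 := (c 0).isLt
      have b2 : (c d : ℕ) < 3 := (c d).isLt
      have b3 : (c' d : ℕ) < 3 := (c' d).isLt
      have e1 : (c 0 : ℕ) ≠ (c d : ℕ) := fun he => hsm0.1 (Fin.ext he)
      have e2 : (c 0 : ℕ) ≠ (c' d : ℕ) := fun he => hsm0.2 (Fin.ext he)
      omega
    refine ⟨h0, hne1, d.pred hd, ?_⟩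
    have hd' : (d.pred hd).succ = d := Fin.succ_pred d hd
    simp only [Fin.tail, hd']
    refine ⟨hne, hadj, ?_, ?_⟩
    · intro e he
      refine hoth e.succ fun hc => he ?_
      apply Fin.succ_injective
      rw [hd', hc]
    · intro e he
      exact hsm e.succ (by rw [← hd']; exact Fin.succ_lt_succ_iff.mpr he)

set_option maxHeartbeats 1000000 in
lemma aux {n : ℕ} : ∀ (k : ℕ) (b : Bool) (l : List (HanoiConf (n+1))),
    l.Chain' bucharestMove → l.Nodup → l.length = 3 * k →
    (∀ c ∈ l, ∀ d : Fin 3, Fin.cons d (Fin.tail c) ∈ l) →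
    (∀ c, l.head? = some c → (c 0 : ℕ) = cond b 2 0) →
    (∀ c, l.getLast? = some c → (c 0 : ℕ) = 0 ∨ (c 0 : ℕ) = 2) →
    ∃ l', l = expand b l' ∧ l'.Nodup ∧ l'.Chain' bucharestMove := by
  intro k
  induction k with
  | zero =>
    intro b l _ _ hlen _ _ _
    have : l = [] := List.length_eq_zero_iff.mp (by omega)
    exact ⟨[], by simp [this, expand], by simp, List.isChain_nil⟩
  | succ k ih =>
    intro b l hchain hnd hlen hcover hhead hlast
    rcases l with _ | ⟨a, l⟩
    · simp only [List.length_nil] at hlen; omega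
    rcases l with _ | ⟨x', l⟩
    · simp only [List.length_cons, List.length_nil] at hlen; omega
    rcases l with _ | ⟨z', rest⟩
    · simp only [List.length_cons, List.length_nil] at hlen; omega
    have hlenL : (a :: x' :: z' :: rest).length = rest.length + 3 := by simp
    have hlen3 : rest.length = 3 * k := by rw [hlenL] at hlen; omega
    set u : HanoiConf n := Fin.tail a with hu
    have hp : (a 0 : ℕ) = cond b 2 0 := hhead a rfl
    have hcond : (a 0 : ℕ) = 0 ∨ (a 0 : ℕ) = 2 := by cases b <;> simp [hp]
    have hX : Fin.cons (1 : Fin 3) u ∈ (a :: x' :: z' :: rest) := hcover a (by simp) 1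
    obtain ⟨⟨i, hi⟩, hgi0⟩ := List.mem_iff_get.mp hX
    have hgi : (a :: x' :: z' :: rest)[i]'hi = Fin.cons (1 : Fin 3) u := hgi0
    have hirange : i < rest.length + 3 := by rw [← hlenL]; exact hi
    have hx0 : ((Fin.cons (1 : Fin 3) u : HanoiConf (n+1)) 0 : ℕ) = 1 := by simp
    have hi0 : i ≠ 0 := by
      intro h; subst h
      have h2 : (a :: x' :: z' :: rest)[0] = Fin.cons (1 : Fin 3) u := hgi
      rw [List.getElem_cons_zero] at h2
      rw [h2] at hcond
      simp at hcond
    have hlne : (a :: x' :: z' :: rest) ≠ [] := by simp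
    have hi1 : i + 1 < (a :: x' :: z' :: rest).length := by
      rw [hlenL]
      by_contra h
      have hieq : i = rest.length + 2 := by omega
      have := hlast (Fin.cons (1 : Fin 3) u) (by
        rw [List.getLast?_eq_getLast hlne, List.getLast_eq_getElem hlne]
        congr 1
        rw [← hgi]
        congr 1
        rw [hlenL]
        omega)
      omega
    have m2 : bucharestMove (Fin.cons (1 : Fin 3) u) ((a :: x' :: z' :: rest)[i+1]'hi1) := by
      have := chain'_getElem hchain i hi1
      rwa [hgi] at this
    have hylt : i - 1 < (a :: x' :: z' :: rest).length := by rw [hlenL]; omega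
    have m1 : bucharestMove ((a :: x' :: z' :: rest)[i-1]'hylt)
        (Fin.cons (1 : Fin 3) u) := by
      have h2 : (i - 1) + 1 < (a :: x' :: z' :: rest).length := by rw [hlenL]; omega
      have h3 := chain'_getElem hchain (i-1) h2
      rw [← hgi]
      convert h3 using 2
      omega
    have hty : Fin.tail ((a :: x' :: z' :: rest)[i-1]'hylt) = u ∧
        (((a :: x' :: z' :: rest)[i-1]'hylt : HanoiConf (n+1)) 0 : ℕ) ≠ 1 ∧
        (((a :: x' :: z' :: rest)[i-1]'hylt : HanoiConf (n+1)) 0 : ℕ) < 3 := by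
      refine ⟨?_, ?_, Fin.isLt _⟩
      · rcases move_cases m1 with ⟨ht, hadj⟩ | ⟨h0, hne1, _⟩
        · rw [ht, Fin.tail_cons]
        · rw [h0] at hne1; simp at hne1
      · rcases move_cases m1 with ⟨ht, hadj⟩ | ⟨h0, hne1, _⟩
        · rw [hx0] at hadj; omega
        · rw [h0] at hne1; simp at hne1
    have htz : Fin.tail ((a :: x' :: z' :: rest)[i+1]'hi1) = u ∧
        (((a :: x' :: z' :: rest)[i+1]'hi1 : HanoiConf (n+1)) 0 : ℕ) ≠ 1 ∧
        (((a :: x' :: z' :: rest)[i+1]'hi1 : HanoiConf (n+1)) 0 : ℕ) < 3 := by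
      refine ⟨?_, ?_, Fin.isLt _⟩
      · rcases move_cases m2 with ⟨ht, hadj⟩ | ⟨h0, hne1, _⟩
        · rw [← ht, Fin.tail_cons]
        · exact absurd hx0 hne1
      · rcases move_cases m2 with ⟨ht, hadj⟩ | ⟨h0, hne1, _⟩
        · rw [hx0] at hadj; omega
        · exact absurd hx0 hne1
    obtain ⟨hty1, hty2, hty3⟩ := hty
    obtain ⟨htz1, htz2, htz3⟩ := htz
    have consCong : ∀ (p q : Fin 3), (p : ℕ) = (q : ℕ) →
        (Fin.cons p u : HanoiConf (n+1)) = Fin.cons q u := by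
      intro p q h
      have hpq : p = q := Fin.ext h
      subst hpq
      rfl
    have ha : a = Fin.cons (a 0) u := by
      conv_lhs => rw [← Fin.cons_self_tail a]
    have hyc : (a :: x' :: z' :: rest)[i-1]'hylt
        = Fin.cons (((a :: x' :: z' :: rest)[i-1]'hylt) 0) u := by
      conv_lhs => rw [← Fin.cons_self_tail ((a :: x' :: z' :: rest)[i-1]'hylt)]
      rw [hty1]
    have hzc0 : (a :: x' :: z' :: rest)[i+1]'hi1
        = Fin.cons (((a :: x' :: z' :: rest)[i+1]'hi1) 0) u := by
      conv_lhs => rw [← Fin.cons_self_tail ((a :: x' :: z' :: rest)[i+1]'hi1)]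
      rw [htz1]
    have hyzne : ((((a :: x' :: z' :: rest)[i-1]'hylt) 0 : Fin 3) : ℕ)
        ≠ ((((a :: x' :: z' :: rest)[i+1]'hi1) 0 : Fin 3) : ℕ) := by
      intro h
      have he : (a :: x' :: z' :: rest)[i-1]'hylt = (a :: x' :: z' :: rest)[i+1]'hi1 := by
        conv_lhs => rw [hyc]
        conv_rhs => rw [hzc0]
        exact consCong _ _ h
      have := (List.Nodup.getElem_inj_iff hnd).mp he
      omega
    have hiq : i = 1 := by
      have hay : (a 0 : ℕ) = ((((a :: x' :: z' :: rest)[i-1]'hylt) 0 : Fin 3) : ℕ)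
          ∨ (a 0 : ℕ) = ((((a :: x' :: z' :: rest)[i+1]'hi1) 0 : Fin 3) : ℕ) := by omega
      rcases hay with h | h
      · have he : (a :: x' :: z' :: rest)[0]'(by rw [hlenL]; omega)
            = (a :: x' :: z' :: rest)[i-1]'hylt := by
          rw [List.getElem_cons_zero]
          conv_lhs => rw [ha]
          conv_rhs => rw [hyc]
          exact consCong _ _ h
        have := (List.Nodup.getElem_inj_iff hnd).mp he
        omega
      · have he : (a :: x' :: z' :: rest)[0]'(by rw [hlenL]; omega)
            = (a :: x' :: z' :: rest)[i+1]'hi1 := by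
          rw [List.getElem_cons_zero]
          conv_lhs => rw [ha]
          conv_rhs => rw [hzc0]
          exact consCong _ _ h
        have := (List.Nodup.getElem_inj_iff hnd).mp he
        omega
    subst hiq
    have hx'e : x' = Fin.cons (1 : Fin 3) u := hgi
    have hLz : ((a :: x' :: z' :: rest)[1+1]'hi1) = z' := rfl
    have htz1' : Fin.tail z' = u := by rw [← hLz]; exact htz1
    have htz2' : (z' 0 : ℕ) ≠ 1 := by rw [← hLz]; exact htz2
    have htz3' : (z' 0 : ℕ) < 3 := (z' 0).isLt
    have hzc : z' = Fin.cons (z' 0) u := by rw [← hLz]; exact hzc0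
    have hndc := hnd
    simp only [List.nodup_cons, List.mem_cons, not_or] at hndc
    obtain ⟨⟨hax, haz, har⟩, ⟨hxz, hxr⟩, hzr, hndr⟩ := hndc
    have hz'nea : (z' 0 : ℕ) ≠ (a 0 : ℕ) := by
      intro h
      refine haz (Eq.symm ?_)
      conv_lhs => rw [hzc]
      conv_rhs => rw [ha]
      exact consCong _ _ h
    have hx'0 : (x' 0 : ℕ) = 1 := by rw [hx'e]; simp
    have notin : ∀ w ∈ rest, Fin.tail w ≠ u := by
      intro w hw heq
      have hwc : w = Fin.cons (w 0) u := by
        conv_lhs => rw [← Fin.cons_self_tail w]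
        rw [heq]
      have hw3 : (w 0 : ℕ) < 3 := (w 0).isLt
      have hcases : (w 0 : ℕ) = (a 0 : ℕ) ∨ (w 0 : ℕ) = (x' 0 : ℕ) ∨ (w 0 : ℕ) = (z' 0 : ℕ) := by
        omega
      have hwa : (w 0 : ℕ) = (a 0 : ℕ) → w = a := by
        intro h
        conv_lhs => rw [hwc]
        conv_rhs => rw [ha]
        exact consCong _ _ h
      have hwx : (w 0 : ℕ) = (x' 0 : ℕ) → w = x' := by
        intro h
        conv_lhs => rw [hwc]
        conv_rhs => rw [hx'e]
        exact consCong _ _ (by rw [h, hx'0]; rfl)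
      have hwz : (w 0 : ℕ) = (z' 0 : ℕ) → w = z' := by
        intro h
        conv_lhs => rw [hwc]
        conv_rhs => rw [hzc]
        exact consCong _ _ h
      rcases hcases with h | h | h
      · exact har ((hwa h) ▸ hw)
      · exact hxr ((hwx h) ▸ hw)
      · exact hzr ((hwz h) ▸ hw)
    have hcov' : ∀ c ∈ rest, ∀ d : Fin 3, Fin.cons d (Fin.tail c) ∈ rest := by
      intro c hc d
      have h1 := hcover c (by simp [hc]) d
      have hne : Fin.tail c ≠ u := notin c hc
      have htt : Fin.tail (Fin.cons d (Fin.tail c)) = Fin.tail c := Fin.tail_cons _ _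
      rcases List.mem_cons.mp h1 with h | h1
      · exact absurd (by rw [h] at htt; rw [← htt] : Fin.tail c = u) hne
      rcases List.mem_cons.mp h1 with h | h1
      · refine absurd ?_ hne
        rw [h] at htt
        rw [← htt, hx'e, Fin.tail_cons]
      rcases List.mem_cons.mp h1 with h | h1
      · refine absurd ?_ hne
        rw [h] at htt
        rw [← htt, htz1']
      · exact h1
    have hhd' : ∀ c, rest.head? = some c → (c 0 : ℕ) = cond (!b) 2 0 := by
      intro c hc
      cases rest with
      | nil => simp at hc
      | cons w t =>
        simp only [List.head?_cons, Option.some.injEq] at hc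
        subst hc
        have hmv : bucharestMove z' w := (List.isChain_cons_cons.mp (hchain.tail.tail)).1
        rcases move_cases hmv with ⟨ht, _⟩ | ⟨h0, _, _⟩
        · exact absurd (by rw [← ht]; exact htz1') (notin w (by simp))
        · have hcz : (w 0 : ℕ) = (z' 0 : ℕ) := by rw [← h0]
          cases b
          · simp only [Bool.not_false, cond_true]
            simp only [cond_false] at hp
            omega
          · simp only [Bool.not_true, cond_false]
            simp only [cond_true] at hp
            omega
    have hlst' : ∀ c, rest.getLast? = some c → (c 0 : ℕ) = 0 ∨ (c 0 : ℕ) = 2 := by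
      intro c hc
      cases rest with
      | nil => simp at hc
      | cons w t =>
        apply hlast c
        rw [List.getLast?_cons_cons, List.getLast?_cons_cons, List.getLast?_cons_cons]
        exact hc
    obtain ⟨t', hrest, hndt, hcht⟩ :=
      ih (!b) rest (hchain.tail.tail.tail) hndr hlen3 hcov' hhd' hlst'
    refine ⟨u :: t', ?_, ?_, ?_⟩
    · show a :: x' :: z' :: rest = ((sweep b).map fun d => Fin.cons d u) ++ expand (!b) t'
      rw [← hrest]
      cases b
      · have hpn : (a 0 : ℕ) = 0 := by simpa using hp
        have e1 : a = Fin.cons (0 : Fin 3) u := by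
          conv_lhs => rw [ha]
          exact consCong _ _ (by simpa using hpn)
        have e3 : z' = Fin.cons (2 : Fin 3) u := by
          conv_lhs => rw [hzc]
          refine consCong _ _ ?_
          show (z' 0 : ℕ) = ((2 : Fin 3) : ℕ)
          have h2 : ((2 : Fin 3) : ℕ) = 2 := rfl
          omega
        rw [e1, hx'e, e3]
        rfl
      · have hpn : (a 0 : ℕ) = 2 := by simpa using hp
        have e1 : a = Fin.cons (2 : Fin 3) u := by
          conv_lhs => rw [ha]
          refine consCong _ _ ?_
          show (a 0 : ℕ) = ((2 : Fin 3) : ℕ)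
          simpa using hpn
        have e3 : z' = Fin.cons (0 : Fin 3) u := by
          conv_lhs => rw [hzc]
          refine consCong _ _ ?_
          show (z' 0 : ℕ) = ((0 : Fin 3) : ℕ)
          have h2 : ((0 : Fin 3) : ℕ) = 0 := rfl
          omega
        rw [e1, hx'e, e3]
        rfl
    · simp only [List.nodup_cons]
      refine ⟨fun hu' => ?_, hndt⟩
      have hm := mem_expand_of_mem (b := !b) hu'
      rw [← hrest] at hm
      exact notin _ hm (Fin.tail_cons _ _)
    · cases t' with
      | nil => exact List.isChain_singleton _
      | cons v t'' =>
        refine List.isChain_cons_cons.mpr ⟨?_, hcht⟩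
        have hw : rest.head? = some (Fin.cons (if !b then 2 else 0) v) := by
          rw [hrest]; exact expand_head? _ _ _
        cases rest with
        | nil => simp at hw
        | cons w t =>
          simp only [List.head?_cons, Option.some.injEq] at hw
          have hmv : bucharestMove z' w := (List.isChain_cons_cons.mp (hchain.tail.tail)).1
          rcases move_cases hmv with ⟨ht, _⟩ | ⟨_, _, hm⟩
          · exact absurd (by rw [← ht]; exact htz1') (notin w (by simp))
          · rw [htz1', hw, Fin.tail_cons] at hm
            exact hm

end BGray

/-- Along any Hamiltonian path of the Towers-of-Bucharest state graph from the
all-on-`P₀` configuration to the all-on-`P₂` configuration, the sequence of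
associated ternary tuples `(a_n, …, a_1)` is exactly the ternary reflected
Gray code (in which consecutive tuples differ in exactly one digit, by ±1). -/
theorem bucharest_path_is_ternary_gray (n : ℕ) (l : List (HanoiConf n))
    (hlen : l.length = 3 ^ n) (hnd : l.Nodup)
    (hhead : l.head? = some (fun _ => 0)) (hlast : l.getLast? = some (fun _ => 2))
    (hchain : l.Chain' bucharestMove) :
    l.map confTuple = mGray 3 n := by
  induction n with
  | zero =>
    rcases l with _ | ⟨c, l⟩
    · simp at hlen
    rcases l with _ | ⟨c', l⟩
    · show [confTuple c] = [[]]
      simp [confTuple]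
    · simp at hlen
  | succ n IH =>
    have hall : ∀ c : HanoiConf (n+1), c ∈ l := by
      intro c
      have h1 : l.toFinset.card = l.length := List.toFinset_card_of_nodup hnd
      have h2 : l.toFinset = Finset.univ := by
        apply Finset.eq_univ_of_card
        rw [h1, hlen]
        simp [Fintype.card_fun]
      have : c ∈ l.toFinset := by rw [h2]; exact Finset.mem_univ c
      simpa using this
    have hpos : 0 < 3 ^ n := pow_pos (by norm_num) n
    have hlen' : l.length = 3 * 3 ^ n := by rw [hlen, pow_succ]; ring
    have hcover : ∀ c ∈ l, ∀ d : Fin 3, Fin.cons d (Fin.tail c) ∈ l :=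
      fun c _ d => hall _
    have hhead' : ∀ c : HanoiConf (n+1), l.head? = some c → (c 0 : ℕ) = cond false 2 0 := by
      intro c hc
      rw [hhead] at hc
      have : (fun _ : Fin (n+1) => (0 : Fin 3)) = c := Option.some.inj hc
      rw [← this]
      rfl
    have hlast' : ∀ c : HanoiConf (n+1), l.getLast? = some c →
        (c 0 : ℕ) = 0 ∨ (c 0 : ℕ) = 2 := by
      intro c hc
      rw [hlast] at hc
      have : (fun _ : Fin (n+1) => (2 : Fin 3)) = c := Option.some.inj hc
      rw [← this]
      right
      rfl
    obtain ⟨l', hle, hnd', hch'⟩ :=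
      BGray.aux (3 ^ n) false l hchain hnd hlen' hcover hhead' hlast'
    have hlenl' : l'.length = 3 ^ n := by
      have h1 := BGray.expand_length false l'
      rw [← hle, hlen'] at h1
      omega
    have hne' : l' ≠ [] := by
      intro h
      rw [h] at hlenl'
      simp at hlenl'
      omega
    have hH : l'.head? = some (fun _ : Fin n => 0) := by
      rcases l' with _ | ⟨v, t⟩
      · exact absurd rfl hne'
      have h1 : l.head? = some (Fin.cons (if false then 2 else 0) v) := by
        rw [hle]; exact BGray.expand_head? _ _ _
      rw [hhead] at h1
      have h2 : (fun _ : Fin (n+1) => (0 : Fin 3)) = Fin.cons (if false then 2 else 0) v :=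
        Option.some.inj h1
      have h3 : v = fun _ : Fin n => (0 : Fin 3) := by
        funext e
        have := congrFun h2 e.succ
        simp at this
        rw [this]
      rw [List.head?_cons, h3]
    have hL : l'.getLast? = some (fun _ : Fin n => 2) := by
      obtain ⟨d, w, h1, h2⟩ := BGray.expand_getLast? (b := false) hne'
      rw [← hle, hlast] at h1
      have h3 : (fun _ : Fin (n+1) => (2 : Fin 3)) = Fin.cons d w := Option.some.inj h1
      have h4 : w = fun _ : Fin n => (2 : Fin 3) := by
        funext e
        have := congrFun h3 e.succ
        simp at this
        rw [this]
      rw [h2, h4]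
    have hres := IH l' hlenl' hnd' hH hL hch'
    rw [hle, BGray.map_confTuple_expand, hres, BGray.mGray_succ]
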